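/- arXiv:0908.1677 — 3 statements merged into one kernel-verified Lean document; each statement's English description precedes it below -/
import Mathlib

section
/- Let g(x,τ) = (2πτ)^{-1/2}·exp(−x²/(2τ)), fix γ ∈ ℝ, h > 0, l < 0, and define for c ∈ ℝ, τ > 0 the two-sided reflection series F(c,τ) = Σ_{m∈ℤ} [ e^{2γ(l−h)m}·g(c − γτ + 2(h−l)m, τ) − e^{2γ((h−l)m + l)}·g(c − γτ − 2l − 2(h−l)m, τ) ]. Then the series converges absolutely for every c ∈ ℝ and τ > 0, and F satisfies the absorbing boundary conditions at both levels: F(h,τ) = 0 and F(l,τ) = 0 for all τ > 0. -/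
/-- The Gaussian heat kernel `g(x,τ) = (2πτ)^{-1/2}·exp(−x²/(2τ))`. -/
noncomputable def gker (x τ : ℝ) : ℝ :=
  Real.exp (-x ^ 2 / (2 * τ)) / Real.sqrt (2 * Real.pi * τ)

/-- The `m`-th term of the two-sided reflection series for drift `γ` and levels `h > 0 > l`. -/
noncomputable def reflTerm (γ h l c τ : ℝ) (m : ℤ) : ℝ :=
  Real.exp (2 * γ * (l - h) * (m : ℝ)) * gker (c - γ * τ + 2 * (h - l) * (m : ℝ)) τ
    - Real.exp (2 * γ * ((h - l) * (m : ℝ) + l))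
        * gker (c - γ * τ - 2 * l - 2 * (h - l) * (m : ℝ)) τ

/-- A quadratic-exponential series over ℤ is summable. -/
lemma summable_exp_quad (A B : ℝ) (hA : 0 < A) :
    Summable fun m : ℤ => Real.exp (-A * (m : ℝ) ^ 2 + B * (m : ℝ)) := by
  have key := summable_pow_mul_jacobiTheta₂_term_bound (|B| / (2 * Real.pi))
      (T := A / Real.pi) (div_pos hA Real.pi_pos) 0
  refine key.of_nonneg_of_le (fun m => (Real.exp_pos _).le) (fun m => ?_)
  rw [pow_zero, one_mul]
  apply Real.exp_le_exp.mpr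
  have hpi := Real.pi_pos
  have h1 : -Real.pi * (A / Real.pi * (m : ℝ) ^ 2 - 2 * (|B| / (2 * Real.pi)) * |(m : ℝ)|)
      = -A * (m : ℝ) ^ 2 + |B| * |(m : ℝ)| := by
    field_simp
    ring
  rw [Int.cast_abs, h1]
  have : B * (m : ℝ) ≤ |B| * |(m : ℝ)| := by
    calc B * (m : ℝ) ≤ |B * (m : ℝ)| := le_abs_self _
    _ = |B| * |(m : ℝ)| := abs_mul _ _
  linarith

/-- Exponential-times-heat-kernel series over ℤ is summable when `d ≠ 0`. -/
lemma summable_exp_gker (α b d τ : ℝ) (hτ : 0 < τ) (hd : d ≠ 0) :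
    Summable fun m : ℤ => Real.exp (α * (m : ℝ)) * gker (b + d * (m : ℝ)) τ := by
  have hA : 0 < d ^ 2 / (2 * τ) := by positivity
  have key := (summable_exp_quad _ (α - b * d / τ) hA).mul_left
      (Real.exp (-b ^ 2 / (2 * τ)) / Real.sqrt (2 * Real.pi * τ))
  refine key.congr fun m => ?_
  unfold gker
  rw [div_mul_eq_mul_div, ← Real.exp_add, ← mul_div_assoc, ← Real.exp_add]
  congr 2
  field_simp
  ring

lemma exp_gker_eq (a b x y τ : ℝ) (hτ : 0 < τ)
    (hxy : a * (2 * τ) - x ^ 2 = b * (2 * τ) - y ^ 2) :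
    Real.exp a * gker x τ = Real.exp b * gker y τ := by
  unfold gker
  rw [← mul_div_assoc, ← mul_div_assoc, ← Real.exp_add, ← Real.exp_add]
  congr 2
  have h2τ : (2 * τ) ≠ 0 := by positivity
  field_simp
  linarith

set_option maxHeartbeats 1000000 in
/-- the two-sided reflection series
`F(c,τ) = Σ_{m∈ℤ} [e^{2γ(l−h)m}·g(c−γτ+2(h−l)m, τ) − e^{2γ((h−l)m+l)}·g(c−γτ−2l−2(h−l)m, τ)]`
converges absolutely for every `c ∈ ℝ`, `τ > 0`, and vanishes at both absorbing
boundaries: `F(h,τ) = 0` and `F(l,τ) = 0` for all `τ > 0`. -/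
theorem two_sided_reflection_series_converges_and_vanishes_at_boundaries
    (γ h l : ℝ) (hh : 0 < h) (hl : l < 0)
    (F : ℝ → ℝ → ℝ)
    (hF : ∀ c τ : ℝ, F c τ = ∑' m : ℤ, reflTerm γ h l c τ m) :
    (∀ (c τ : ℝ), 0 < τ → Summable (fun m : ℤ => |reflTerm γ h l c τ m|)) ∧
    (∀ τ : ℝ, 0 < τ → F h τ = 0) ∧
    (∀ τ : ℝ, 0 < τ → F l τ = 0) := by
  have hk : (2 : ℝ) * (h - l) ≠ 0 := by
    have : l < h := hl.trans hh
    intro hcontra; nlinarith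
  -- Summability of the first part
  have hsum1 : ∀ c τ : ℝ, 0 < τ → Summable
      (fun m : ℤ => Real.exp (2 * γ * (l - h) * (m : ℝ))
        * gker (c - γ * τ + 2 * (h - l) * (m : ℝ)) τ) := by
    intro c τ hτ
    have := summable_exp_gker (2 * γ * (l - h)) (c - γ * τ) (2 * (h - l)) τ hτ hk
    refine this.congr fun m => ?_
    ring_nf
  have hsum2 : ∀ c τ : ℝ, 0 < τ → Summable
      (fun m : ℤ => Real.exp (2 * γ * ((h - l) * (m : ℝ) + l))
        * gker (c - γ * τ - 2 * l - 2 * (h - l) * (m : ℝ)) τ) := by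
    intro c τ hτ
    have hk' : -(2 * (h - l)) ≠ 0 := by simpa using hk
    have := (summable_exp_gker (2 * γ * (h - l)) (c - γ * τ - 2 * l) (-(2 * (h - l)))
      τ hτ hk').mul_left (Real.exp (2 * γ * l))
    refine this.congr fun m => ?_
    rw [← mul_assoc, ← Real.exp_add]
    have e1 : 2 * γ * l + 2 * γ * (h - l) * (m : ℝ) = 2 * γ * ((h - l) * (m : ℝ) + l) := by ring
    have e2 : c - γ * τ - 2 * l + -(2 * (h - l)) * (m : ℝ)
        = c - γ * τ - 2 * l - 2 * (h - l) * (m : ℝ) := by ring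
    rw [e1, e2]
  have hsumT : ∀ c τ : ℝ, 0 < τ → Summable (fun m : ℤ => reflTerm γ h l c τ m) := by
    intro c τ hτ
    exact (hsum1 c τ hτ).sub (hsum2 c τ hτ)
  refine ⟨fun c τ hτ => (hsumT c τ hτ).abs, ?_, ?_⟩
  · -- F h τ = 0
    intro τ hτ
    rw [hF]
    set A : ℤ → ℝ := fun m => Real.exp (2 * γ * (l - h) * (m : ℝ))
        * gker (h - γ * τ + 2 * (h - l) * (m : ℝ)) τ with hA
    have hterm : ∀ m : ℤ, reflTerm γ h l h τ m = A m - A (m - 1) := by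
      intro m
      unfold reflTerm
      simp only [hA]
      congr 1
      symm
      apply exp_gker_eq _ _ _ _ _ hτ
      push_cast
      ring
    have hAsum : Summable A := hsum1 h τ hτ
    have hAsum' : Summable (fun m : ℤ => A (m - 1)) :=
      (Equiv.subRight (1 : ℤ)).summable_iff.mpr hAsum
    calc (∑' m : ℤ, reflTerm γ h l h τ m)
        = ∑' m : ℤ, (A m - A (m - 1)) := by exact tsum_congr hterm
      _ = (∑' m : ℤ, A m) - ∑' m : ℤ, A (m - 1) := Summable.tsum_sub hAsum hAsum'
      _ = 0 := by
          have he := (Equiv.subRight (1 : ℤ)).tsum_eq A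
          simp only [Equiv.subRight_apply] at he
          rw [he]
          ring
  · -- F l τ = 0
    intro τ hτ
    rw [hF]
    have hterm : ∀ m : ℤ, reflTerm γ h l l τ m = 0 := by
      intro m
      unfold reflTerm
      rw [sub_eq_zero]
      apply exp_gker_eq _ _ _ _ _ hτ
      ring
    simp [hterm]
end

section
/- Let g(x,τ) = (2πτ)^{-1/2}·exp(−x²/(2τ)), fix γ ∈ ℝ, h > 0, l < 0, and define F(c,τ) = Σ_{m∈ℤ} [ e^{2γ(l−h)m}·g(c − γτ + 2(h−l)m, τ) − e^{2γ((h−l)m + l)}·g(c − γτ − 2l − 2(h−l)m, τ) ]. Then for every τ > 0 and l < c < h, F satisfies the advection–diffusion equation ∂F/∂τ + γ·∂F/∂c = (1/2)·∂²F/∂c². -/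

noncomputable def gd1 (x t : ℝ) : ℝ := -(x/t) * gker x t
noncomputable def gd2 (x t : ℝ) : ℝ := ((x/t)^2 - 1/t) * gker x t
noncomputable def gdt (γ x t : ℝ) : ℝ := (γ*x/t + x^2/(2*t^2) - 1/(2*t)) * gker x t

lemma gdt_pde (γ x t : ℝ) : gdt γ x t + γ * gd1 x t = (1/2) * gd2 x t := by
  unfold gdt gd1 gd2; ring

lemma hasDerivAt_gker_x (t : ℝ) (ht : 0 < t) (x : ℝ) :
    HasDerivAt (fun y => gker y t) (gd1 x t) x := by
  have hu : HasDerivAt (fun y : ℝ => -y^2/(2*t)) (-(x/t)) x := by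
    have := ((hasDerivAt_pow 2 x).neg).div_const (2*t)
    refine this.congr_deriv ?_
    field_simp
    ring
  have := (hu.exp).div_const (Real.sqrt (2*Real.pi*t))
  refine this.congr_deriv ?_
  unfold gd1 gker
  ring

lemma hasDerivAt_gd1_x (t : ℝ) (ht : 0 < t) (x : ℝ) :
    HasDerivAt (fun y => gd1 y t) (gd2 x t) x := by
  have h1 : HasDerivAt (fun y : ℝ => -(y/t)) (-(1/t)) x :=
    ((hasDerivAt_id x).div_const t).neg
  have := h1.mul (hasDerivAt_gker_x t ht x)
  refine this.congr_deriv ?_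
  unfold gd1 gd2
  ring

lemma hasDerivAt_gker_t (γ w τ : ℝ) (hτ : 0 < τ) :
    HasDerivAt (fun t => gker (w - γ*t) t) (gdt γ (w - γ*τ) τ) τ := by
  have hπ : (0:ℝ) < Real.pi := Real.pi_pos
  have hs0 : (0:ℝ) < Real.sqrt (2*Real.pi*τ) := Real.sqrt_pos.2 (by positivity)
  set s := Real.sqrt (2*Real.pi*τ) with hs
  have hs2 : s^2 = 2*Real.pi*τ := Real.sq_sqrt (by positivity)
  have h1 : HasDerivAt (fun t : ℝ => -(w - γ*t)^2) (2*γ*(w-γ*τ)) τ := by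
    have hwt : HasDerivAt (fun t : ℝ => w - γ*t) (-γ) τ := by
      simpa using ((hasDerivAt_id τ).const_mul γ).const_sub w
    have := (hwt.pow 2).neg
    refine this.congr_deriv ?_
    ring
  have h2 : HasDerivAt (fun t : ℝ => 2*t) 2 τ := by
    simpa using (hasDerivAt_id τ).const_mul 2
  have hu : HasDerivAt (fun t : ℝ => -(w - γ*t)^2/(2*t))
      (γ*(w-γ*τ)/τ + (w-γ*τ)^2/(2*τ^2)) τ := by
    have := h1.div h2 (by positivity)
    refine this.congr_deriv ?_
    field_simp
    ring
  have hN : HasDerivAt (fun t : ℝ => Real.exp (-(w - γ*t)^2/(2*t)))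
      (Real.exp (-(w - γ*τ)^2/(2*τ)) * (γ*(w-γ*τ)/τ + (w-γ*τ)^2/(2*τ^2))) τ := hu.exp
  have hD : HasDerivAt (fun t : ℝ => Real.sqrt (2*Real.pi*t)) (Real.pi / s) τ := by
    have h0 : HasDerivAt (fun t : ℝ => 2*Real.pi*t) (2*Real.pi) τ := by
      simpa using (hasDerivAt_id τ).const_mul (2*Real.pi)
    have := (Real.hasDerivAt_sqrt (show 2*Real.pi*τ ≠ 0 by positivity)).comp τ h0
    refine this.congr_deriv ?_
    rw [← hs]
    field_simp
  have := hN.div hD (ne_of_gt hs0)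
  refine this.congr_deriv ?_
  have key : Real.pi / s = s / (2*τ) := by
    rw [div_eq_div_iff (ne_of_gt hs0) (by positivity)]
    nlinarith [hs2]
  rw [key]
  unfold gdt gker
  rw [← hs]
  field_simp

noncomputable def dC (γ h l c τ : ℝ) (m : ℤ) : ℝ :=
  Real.exp (2 * γ * (l - h) * (m : ℝ)) * gd1 (c - γ * τ + 2 * (h - l) * (m : ℝ)) τ
    - Real.exp (2 * γ * ((h - l) * (m : ℝ) + l))
        * gd1 (c - γ * τ - 2 * l - 2 * (h - l) * (m : ℝ)) τ
noncomputable def dCC (γ h l c τ : ℝ) (m : ℤ) : ℝ :=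
  Real.exp (2 * γ * (l - h) * (m : ℝ)) * gd2 (c - γ * τ + 2 * (h - l) * (m : ℝ)) τ
    - Real.exp (2 * γ * ((h - l) * (m : ℝ) + l))
        * gd2 (c - γ * τ - 2 * l - 2 * (h - l) * (m : ℝ)) τ
noncomputable def dT (γ h l c τ : ℝ) (m : ℤ) : ℝ :=
  Real.exp (2 * γ * (l - h) * (m : ℝ)) * gdt γ (c - γ * τ + 2 * (h - l) * (m : ℝ)) τ
    - Real.exp (2 * γ * ((h - l) * (m : ℝ) + l))
        * gdt γ (c - γ * τ - 2 * l - 2 * (h - l) * (m : ℝ)) τ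

lemma term_pde (γ h l c τ : ℝ) (m : ℤ) :
    dT γ h l c τ m + γ * dC γ h l c τ m = (1/2) * dCC γ h l c τ m := by
  unfold dT dC dCC gdt gd1 gd2; ring

lemma hasDerivAt_reflTerm_c (γ h l τ : ℝ) (ht : 0 < τ) (m : ℤ) (c : ℝ) :
    HasDerivAt (fun c' => reflTerm γ h l c' τ m) (dC γ h l c τ m) c := by
  have inner1 : HasDerivAt (fun c' : ℝ => c' - γ*τ + 2*(h-l)*(m:ℝ)) 1 c := by
    simpa using ((hasDerivAt_id c).sub_const (γ*τ)).add_const (2*(h-l)*(m:ℝ))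
  have inner2 : HasDerivAt (fun c' : ℝ => c' - γ*τ - 2*l - 2*(h-l)*(m:ℝ)) 1 c := by
    simpa using (((hasDerivAt_id c).sub_const (γ*τ)).sub_const (2*l)).sub_const (2*(h-l)*(m:ℝ))
  have h1 := ((hasDerivAt_gker_x τ ht (c - γ*τ + 2*(h-l)*(m:ℝ))).comp c inner1).const_mul
    (Real.exp (2 * γ * (l - h) * (m : ℝ)))
  have h2 := ((hasDerivAt_gker_x τ ht (c - γ*τ - 2*l - 2*(h-l)*(m:ℝ))).comp c inner2).const_mul
    (Real.exp (2 * γ * ((h - l) * (m : ℝ) + l)))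
  have := h1.sub h2
  refine this.congr_deriv ?_
  unfold dC; ring

lemma hasDerivAt_dC_c (γ h l τ : ℝ) (ht : 0 < τ) (m : ℤ) (c : ℝ) :
    HasDerivAt (fun c' => dC γ h l c' τ m) (dCC γ h l c τ m) c := by
  have inner1 : HasDerivAt (fun c' : ℝ => c' - γ*τ + 2*(h-l)*(m:ℝ)) 1 c := by
    simpa using ((hasDerivAt_id c).sub_const (γ*τ)).add_const (2*(h-l)*(m:ℝ))
  have inner2 : HasDerivAt (fun c' : ℝ => c' - γ*τ - 2*l - 2*(h-l)*(m:ℝ)) 1 c := by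
    simpa using (((hasDerivAt_id c).sub_const (γ*τ)).sub_const (2*l)).sub_const (2*(h-l)*(m:ℝ))
  have h1 := ((hasDerivAt_gd1_x τ ht (c - γ*τ + 2*(h-l)*(m:ℝ))).comp c inner1).const_mul
    (Real.exp (2 * γ * (l - h) * (m : ℝ)))
  have h2 := ((hasDerivAt_gd1_x τ ht (c - γ*τ - 2*l - 2*(h-l)*(m:ℝ))).comp c inner2).const_mul
    (Real.exp (2 * γ * ((h - l) * (m : ℝ) + l)))
  have := h1.sub h2
  refine this.congr_deriv ?_
  unfold dCC; ring

lemma hasDerivAt_reflTerm_t (γ h l c : ℝ) (m : ℤ) (τ : ℝ) (hτ : 0 < τ) :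
    HasDerivAt (fun τ' => reflTerm γ h l c τ' m) (dT γ h l c τ m) τ := by
  have p1 : HasDerivAt (fun t => gker (c - γ*t + 2*(h-l)*(m:ℝ)) t)
      (gdt γ (c - γ*τ + 2*(h-l)*(m:ℝ)) τ) τ := by
    have := hasDerivAt_gker_t γ (c + 2*(h-l)*(m:ℝ)) τ hτ
    have heq : (fun t => gker (c + 2*(h-l)*(m:ℝ) - γ*t) t)
        = (fun t => gker (c - γ*t + 2*(h-l)*(m:ℝ)) t) := by
      funext t; congr 1; ring
    rw [heq] at this
    convert this using 2
    ring
  have p2 : HasDerivAt (fun t => gker (c - γ*t - 2*l - 2*(h-l)*(m:ℝ)) t)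
      (gdt γ (c - γ*τ - 2*l - 2*(h-l)*(m:ℝ)) τ) τ := by
    have := hasDerivAt_gker_t γ (c - 2*l - 2*(h-l)*(m:ℝ)) τ hτ
    have heq : (fun t => gker (c - 2*l - 2*(h-l)*(m:ℝ) - γ*t) t)
        = (fun t => gker (c - γ*t - 2*l - 2*(h-l)*(m:ℝ)) t) := by
      funext t; congr 1; ring
    rw [heq] at this
    convert this using 2
    ring
  have := (p1.const_mul (Real.exp (2 * γ * (l - h) * (m : ℝ)))).sub
    (p2.const_mul (Real.exp (2 * γ * ((h - l) * (m : ℝ) + l))))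
  exact this

lemma gker_nonneg (x t : ℝ) : 0 ≤ gker x t := by
  unfold gker; positivity

lemma gker_le {τmin t : ℝ} (hmin : 0 < τmin) (ht : τmin ≤ t) (x : ℝ) :
    gker x t ≤ Real.exp (-x^2/(2*t)) / Real.sqrt (2*Real.pi*τmin) := by
  unfold gker
  gcongr

lemma abs_x_le (x : ℝ) : |x| ≤ 1 + x^2 := by
  nlinarith [sq_nonneg (|x| - 1), sq_abs x, abs_nonneg x]

lemma abs_gker_le {τmin t : ℝ} (hmin : 0 < τmin) (ht : τmin ≤ t) (x : ℝ) :
    |gker x t| ≤ 1 * ((1+x^2) * (Real.exp (-x^2/(2*t)) / Real.sqrt (2*Real.pi*τmin))) := by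
  rw [abs_of_nonneg (gker_nonneg x t), one_mul]
  calc gker x t ≤ Real.exp (-x^2/(2*t)) / Real.sqrt (2*Real.pi*τmin) := gker_le hmin ht x
    _ ≤ (1+x^2) * (Real.exp (-x^2/(2*t)) / Real.sqrt (2*Real.pi*τmin)) := by
        nlinarith [sq_nonneg x, Real.exp_pos (-x^2/(2*t)), Real.sqrt_pos.2
          (show (0:ℝ) < 2*Real.pi*τmin by positivity),
          div_nonneg (Real.exp_pos (-x^2/(2*t))).le (Real.sqrt_nonneg (2*Real.pi*τmin))]

lemma abs_gd1_le {τmin t : ℝ} (hmin : 0 < τmin) (ht : τmin ≤ t) (x : ℝ) :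
    |gd1 x t| ≤ (1/τmin) * ((1+x^2) * (Real.exp (-x^2/(2*t)) / Real.sqrt (2*Real.pi*τmin))) := by
  have ht0 : 0 < t := lt_of_lt_of_le hmin ht
  have hgk := gker_le hmin ht x
  have hE : (0:ℝ) ≤ Real.exp (-x^2/(2*t)) / Real.sqrt (2*Real.pi*τmin) :=
    div_nonneg (Real.exp_pos _).le (Real.sqrt_nonneg _)
  calc |gd1 x t| = (|x|/t) * gker x t := by
        unfold gd1
        rw [abs_mul, abs_of_nonneg (gker_nonneg x t), abs_neg, abs_div, abs_of_pos ht0]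
    _ ≤ ((1+x^2)/τmin) * (Real.exp (-x^2/(2*t)) / Real.sqrt (2*Real.pi*τmin)) := by
        apply mul_le_mul _ hgk (gker_nonneg x t) (by positivity)
        exact div_le_div₀ (by positivity) (abs_x_le x) hmin ht
    _ = (1/τmin) * ((1+x^2) * (Real.exp (-x^2/(2*t)) / Real.sqrt (2*Real.pi*τmin))) := by ring

lemma abs_gd2_le {τmin t : ℝ} (hmin : 0 < τmin) (ht : τmin ≤ t) (x : ℝ) :
    |gd2 x t| ≤ (1/τmin^2 + 1/τmin) *
      ((1+x^2) * (Real.exp (-x^2/(2*t)) / Real.sqrt (2*Real.pi*τmin))) := by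
  have ht0 : 0 < t := lt_of_lt_of_le hmin ht
  have hgk := gker_le hmin ht x
  have hcoef : |(x/t)^2 - 1/t| ≤ (1/τmin^2 + 1/τmin) * (1+x^2) := by
    have h1 : |(x/t)^2 - 1/t| ≤ (x/t)^2 + 1/t := by
      calc |(x/t)^2 - 1/t| ≤ |(x/t)^2| + |1/t| := abs_sub _ _
        _ = (x/t)^2 + 1/t := by rw [abs_of_nonneg (sq_nonneg _), abs_of_pos (by positivity)]
    have h2 : (x/t)^2 ≤ x^2*(1/τmin^2) := by
      rw [div_pow, div_eq_mul_one_div]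
      gcongr <;> nlinarith [sq_nonneg x]
    have h3 : 1/t ≤ 1/τmin := by gcongr
    nlinarith [sq_nonneg x, one_div_pos.2 hmin,
      one_div_pos.2 (show (0:ℝ) < τmin^2 by positivity),
      mul_nonneg (sq_nonneg x) (one_div_pos.2 hmin).le,
      mul_nonneg (sq_nonneg x) (one_div_pos.2 (show (0:ℝ) < τmin^2 by positivity)).le]
  calc |gd2 x t| = |(x/t)^2 - 1/t| * gker x t := by
        unfold gd2; rw [abs_mul, abs_of_nonneg (gker_nonneg x t)]
    _ ≤ ((1/τmin^2 + 1/τmin) * (1+x^2)) * (Real.exp (-x^2/(2*t)) / Real.sqrt (2*Real.pi*τmin)) := by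
        apply mul_le_mul hcoef hgk (gker_nonneg x t) (by positivity)
    _ = _ := by ring

lemma abs_gdt_le {τmin t : ℝ} (γ : ℝ) (hmin : 0 < τmin) (ht : τmin ≤ t) (x : ℝ) :
    |gdt γ x t| ≤ (|γ|/τmin + 1/τmin^2 + 1/τmin) *
      ((1+x^2) * (Real.exp (-x^2/(2*t)) / Real.sqrt (2*Real.pi*τmin))) := by
  have ht0 : 0 < t := lt_of_lt_of_le hmin ht
  have hgk := gker_le hmin ht x
  have hcoef : |γ*x/t + x^2/(2*t^2) - 1/(2*t)| ≤ (|γ|/τmin + 1/τmin^2 + 1/τmin) * (1+x^2) := by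
    have h1 : |γ*x/t + x^2/(2*t^2) - 1/(2*t)| ≤ (|γ|) * (|x|) / t + x^2/(2*t^2) + 1/(2*t) := by
      calc |γ*x/t + x^2/(2*t^2) - 1/(2*t)| ≤ |(γ*x/t + x^2/(2*t^2))| + |(1/(2*t))| := abs_sub _ _
        _ ≤ |(γ*x/t)| + |(x^2/(2*t^2))| + |(1/(2*t))| := by
            have := abs_add_le (γ*x/t) (x^2/(2*t^2)); linarith
        _ = (|γ|) * (|x|) / t + x^2/(2*t^2) + 1/(2*t) := by
            rw [abs_div, abs_mul, abs_of_pos ht0, abs_of_nonneg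
              (show (0:ℝ) ≤ x^2/(2*t^2) by positivity), abs_of_pos
              (show (0:ℝ) < 1/(2*t) by positivity)]
    have h2 : (|γ|) * (|x|) / t ≤ ((|γ|)*(1+x^2))*(1/τmin) := by
      rw [← div_eq_mul_one_div]
      apply div_le_div₀ (by positivity) _ hmin ht
      exact mul_le_mul_of_nonneg_left (abs_x_le x) (abs_nonneg γ)
    have h3 : x^2/(2*t^2) ≤ x^2*(1/τmin^2) := by
      rw [div_eq_mul_one_div]
      gcongr <;> nlinarith [sq_nonneg x]
    have h4 : 1/(2*t) ≤ 1/τmin := by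
      apply div_le_div₀ zero_le_one le_rfl hmin; linarith
    have h5 : |γ| * (1/τmin) = |γ|/τmin := mul_one_div _ _
    nlinarith [sq_nonneg x, abs_nonneg γ, one_div_pos.2 hmin,
      one_div_pos.2 (show (0:ℝ) < τmin^2 by positivity),
      mul_nonneg (abs_nonneg γ) (sq_nonneg x),
      mul_nonneg (sq_nonneg x) (one_div_pos.2 hmin).le,
      mul_nonneg (sq_nonneg x) (one_div_pos.2 (show (0:ℝ) < τmin^2 by positivity)).le,
      mul_nonneg (mul_nonneg (abs_nonneg γ) (sq_nonneg x)) (one_div_pos.2 hmin).le]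
  calc |gdt γ x t| = |γ*x/t + x^2/(2*t^2) - 1/(2*t)| * gker x t := by
        unfold gdt; rw [abs_mul, abs_of_nonneg (gker_nonneg x t)]
    _ ≤ ((|γ|/τmin + 1/τmin^2 + 1/τmin) * (1+x^2)) *
        (Real.exp (-x^2/(2*t)) / Real.sqrt (2*Real.pi*τmin)) :=
        mul_le_mul hcoef hgk (gker_nonneg x t) (by positivity)
    _ = _ := by ring

set_option maxHeartbeats 1000000 in
lemma term_bound {τmin τmax t d R Q Cφ A : ℝ} (m : ℤ) {x E v φval : ℝ}
    (hmin : 0 < τmin) (ht1 : τmin ≤ t) (ht2 : t ≤ τmax)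
    (hd : 0 < d) (hR : 0 ≤ R) (hQ : 0 ≤ Q) (hC : 0 ≤ Cφ)
    (hE : |E| ≤ Q * Real.exp (A * |(m:ℝ)|))
    (hx : x = v + 2*d*(m:ℝ) ∨ x = v - 2*d*(m:ℝ)) (hv : |v| ≤ R)
    (hφ : |φval| ≤ Cφ * ((1+x^2) * (Real.exp (-x^2/(2*t)) / Real.sqrt (2*Real.pi*τmin)))) :
    |E * φval| ≤ (Q * Cφ * (1+8*d^2+2*R^2) * Real.exp (R^2/(2*τmax)) / Real.sqrt (2*Real.pi*τmin)) *
      ((1 + (m:ℝ)^2) * Real.exp (A * |(m:ℝ)| - (d^2/τmax) * (m:ℝ)^2)) := by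
  have hτmax : 0 < τmax := lt_of_lt_of_le hmin (ht1.trans ht2)
  have ht0 : 0 < t := lt_of_lt_of_le hmin ht1
  have hv2 : v^2 ≤ R^2 := by nlinarith [abs_nonneg v, sq_abs v]
  have hx2a : x^2 ≤ 8*d^2*(m:ℝ)^2 + 2*R^2 := by
    rcases hx with hx | hx <;> subst hx <;>
      nlinarith [sq_nonneg (v - 2*d*(m:ℝ)), sq_nonneg (v + 2*d*(m:ℝ)), sq_nonneg (d*(m:ℝ))]
  have hx2b : 2*d^2*(m:ℝ)^2 - R^2 ≤ x^2 := by
    rcases hx with hx | hx <;> subst hx <;>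
      nlinarith [sq_nonneg (2*d*(m:ℝ) + 2*v), sq_nonneg (2*d*(m:ℝ) - 2*v)]
  have hpoly : (1+x^2) ≤ (1+8*d^2+2*R^2) * (1+(m:ℝ)^2) := by
    nlinarith [sq_nonneg (m:ℝ), sq_nonneg d, sq_nonneg R, sq_nonneg (d*(m:ℝ)),
      mul_nonneg (sq_nonneg d) (sq_nonneg (m:ℝ)), mul_nonneg (sq_nonneg R) (sq_nonneg (m:ℝ))]
  have hexp : Real.exp (-x^2/(2*t)) ≤ Real.exp (R^2/(2*τmax)) * Real.exp (-(d^2/τmax)*(m:ℝ)^2) := by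
    rw [← Real.exp_add]
    apply Real.exp_le_exp.2
    have e1 : -x^2/(2*t) ≤ -x^2/(2*τmax) := by
      rw [div_le_div_iff₀ (by positivity) (by positivity)]
      nlinarith [sq_nonneg x, mul_le_mul_of_nonneg_left ht2 (sq_nonneg x)]
    have e2 : -x^2/(2*τmax) ≤ (R^2 - 2*d^2*(m:ℝ)^2)/(2*τmax) := by
      gcongr
      linarith
    have e3 : (R^2 - 2*d^2*(m:ℝ)^2)/(2*τmax) = R^2/(2*τmax) + -((d^2/τmax)*(m:ℝ)^2) := by
      field_simp
      ring
    linarith [e1, e2, e3.le]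
  have hs0 : (0:ℝ) < Real.sqrt (2*Real.pi*τmin) := Real.sqrt_pos.2 (by positivity)
  calc |E * φval| = |E| * |φval| := abs_mul _ _
    _ ≤ (Q * Real.exp (A*|(m:ℝ)|)) *
        (Cφ * ((1+x^2) * (Real.exp (-x^2/(2*t)) / Real.sqrt (2*Real.pi*τmin)))) :=
        mul_le_mul hE hφ (abs_nonneg _) (by positivity)
    _ ≤ (Q * Real.exp (A*|(m:ℝ)|)) *
        (Cφ * (((1+8*d^2+2*R^2) * (1+(m:ℝ)^2)) *
          ((Real.exp (R^2/(2*τmax)) * Real.exp (-(d^2/τmax)*(m:ℝ)^2)) / Real.sqrt (2*Real.pi*τmin)))) := by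
        gcongr
    _ = (Q * Cφ * (1+8*d^2+2*R^2) * Real.exp (R^2/(2*τmax)) / Real.sqrt (2*Real.pi*τmin)) *
        ((1 + (m:ℝ)^2) * (Real.exp (A*|(m:ℝ)|) * Real.exp (-((d^2/τmax) * (m:ℝ)^2)))) := by
        ring_nf
    _ = _ := by
        rw [sub_eq_add_neg, Real.exp_add]

lemma summable_poly_exp (P a b : ℝ) (hb : 0 < b) :
    Summable (fun m : ℤ => P * ((1 + (m:ℝ)^2) * Real.exp (a * |(m:ℝ)| - b * (m:ℝ)^2))) := by
  apply Summable.mul_left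
  have key : Summable (fun n : ℕ => (1 + (n:ℝ)^2) * Real.exp (a * n - b * n^2)) := by
    obtain ⟨N, hN⟩ := exists_nat_ge ((a+1)/b)
    have hbN : a + 1 ≤ b * N := by
      rw [div_le_iff₀ hb] at hN
      linarith
    rw [← summable_nat_add_iff N]
    have hgs : Summable (fun n : ℕ => (1 + ((n+N:ℕ):ℝ)^2) * Real.exp (-((n+N:ℕ):ℝ))) := by
      have hbase : Summable (fun n : ℕ => (1 + (n:ℝ)^2) * Real.exp (-(n:ℝ))) := by
        have h1 : Summable (fun n : ℕ => Real.exp (-(n:ℝ))) := Real.summable_exp_neg_nat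
        have h2 : Summable (fun n : ℕ => (n:ℝ)^2 * Real.exp (-(1:ℝ) * n)) :=
          Real.summable_pow_mul_exp_neg_nat_mul 2 one_pos
        have h2' : Summable (fun n : ℕ => (n:ℝ)^2 * Real.exp (-(n:ℝ))) :=
          h2.congr (fun n => by norm_num)
        apply (h1.add h2').congr
        intro n
        ring
      exact (summable_nat_add_iff N).2 hbase
    apply Summable.of_nonneg_of_le _ _ hgs
    · intro n
      positivity
    · intro n
      have hn : (N:ℝ) ≤ ((n+N:ℕ):ℝ) := by push_cast; linarith [Nat.cast_nonneg (α := ℝ) n]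
      have hnn : (0:ℝ) ≤ ((n+N:ℕ):ℝ) := Nat.cast_nonneg _
      apply mul_le_mul_of_nonneg_left _ (by positivity)
      apply Real.exp_le_exp.2
      have hgeq : a + 1 ≤ b * ((n+N:ℕ):ℝ) := by
        calc a + 1 ≤ b * N := hbN
          _ ≤ b * ((n+N:ℕ):ℝ) := by gcongr
      nlinarith [sq_nonneg ((n+N:ℕ):ℝ)]
  apply Summable.of_nat_of_neg
  · apply key.congr
    intro n
    push_cast
    rw [abs_of_nonneg (Nat.cast_nonneg (α := ℝ) n)]
  · apply key.congr
    intro n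
    push_cast
    rw [abs_neg, abs_of_nonneg (Nat.cast_nonneg (α := ℝ) n)]
    ring_nf

set_option maxHeartbeats 1000000 in
lemma refl_bound {γ h l : ℝ} (hh : 0 < h) (hl : l < 0) {τ0 : ℝ} (hτ0 : 0 < τ0)
    {Cφ : ℝ} (hC : 0 ≤ Cφ) (φ : ℝ → ℝ → ℝ)
    (hφ : ∀ x t, τ0/2 ≤ t →
      |φ x t| ≤ Cφ * ((1+x^2) * (Real.exp (-x^2/(2*t)) / Real.sqrt (2*Real.pi*(τ0/2)))))
    (m : ℤ) {c' t : ℝ} (hc1 : l ≤ c') (hc2 : c' ≤ h) (ht1 : τ0/2 ≤ t) (ht2 : t ≤ 2*τ0) :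
    |Real.exp (2*γ*(l-h)*(m:ℝ)) * φ (c' - γ*t + 2*(h-l)*(m:ℝ)) t
      - Real.exp (2*γ*((h-l)*(m:ℝ)+l)) * φ (c' - γ*t - 2*l - 2*(h-l)*(m:ℝ)) t|
    ≤ ((1 + Real.exp (2*(|γ|)*(|l|))) * Cφ
          * (1+8*(h-l)^2+2*(3*(|l|)+(|h|)+4*(|γ|)*τ0)^2)
          * Real.exp ((3*(|l|)+(|h|)+4*(|γ|)*τ0)^2/(2*(2*τ0))) / Real.sqrt (2*Real.pi*(τ0/2)))
      * ((1 + (m:ℝ)^2) *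
          Real.exp (2*(|γ|)*(h-l) * |(m:ℝ)| - (h-l)^2/(2*τ0) * (m:ℝ)^2)) := by
  have hd : 0 < h - l := by linarith
  have hmin : 0 < τ0/2 := by linarith
  have ht0 : 0 < t := lt_of_lt_of_le hmin ht1
  have hR : (0:ℝ) ≤ 3*(|l|)+(|h|)+4*(|γ|)*τ0 := by positivity
  have hc' : |c'| ≤ (|l|) + (|h|) := by
    rw [abs_le]
    constructor
    · have := neg_abs_le l; nlinarith [abs_nonneg h]
    · have := le_abs_self h; nlinarith [abs_nonneg l]
  have hγt : |γ*t| ≤ 2*(|γ|)*τ0 := by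
    rw [abs_mul, abs_of_pos ht0]
    nlinarith [abs_nonneg γ]
  have hv1 : |c' - γ*t| ≤ 3*(|l|)+(|h|)+4*(|γ|)*τ0 := by
    calc |c' - γ*t| ≤ |c'| + |γ*t| := abs_sub _ _
      _ ≤ 3*(|l|)+(|h|)+4*(|γ|)*τ0 := by nlinarith [abs_nonneg l, abs_nonneg γ]
  have hv2 : |c' - γ*t - 2*l| ≤ 3*(|l|)+(|h|)+4*(|γ|)*τ0 := by
    calc |c' - γ*t - 2*l| ≤ |c' - γ*t| + |2*l| := abs_sub _ _
      _ = |c' - γ*t| + 2*(|l|) := by rw [abs_mul]; norm_num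
      _ ≤ (|c'| + |γ*t|) + 2*(|l|) := by linarith [abs_sub (c') (γ*t)]
      _ ≤ 3*(|l|)+(|h|)+4*(|γ|)*τ0 := by nlinarith [abs_nonneg l, abs_nonneg γ]
  have hE1 : |Real.exp (2*γ*(l-h)*(m:ℝ))| ≤ 1 * Real.exp (2*(|γ|)*(h-l) * |(m:ℝ)|) := by
    rw [abs_of_pos (Real.exp_pos _), one_mul]
    apply Real.exp_le_exp.2
    calc 2*γ*(l-h)*(m:ℝ) ≤ |2*γ*(l-h)*(m:ℝ)| := le_abs_self _
      _ = 2*(|γ|)*(h-l) * |(m:ℝ)| := by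
          rw [abs_mul, abs_mul, abs_mul, abs_two, abs_of_nonpos (show l-h ≤ 0 by linarith)]
          ring
  have hE2 : |Real.exp (2*γ*((h-l)*(m:ℝ)+l))| ≤
      Real.exp (2*(|γ|)*(|l|)) * Real.exp (2*(|γ|)*(h-l) * |(m:ℝ)|) := by
    rw [abs_of_pos (Real.exp_pos _), ← Real.exp_add]
    apply Real.exp_le_exp.2
    have e : 2*γ*((h-l)*(m:ℝ)+l) = 2*γ*(h-l)*(m:ℝ) + 2*γ*l := by ring
    rw [e]
    have b1 : 2*γ*(h-l)*(m:ℝ) ≤ 2*(|γ|)*(h-l) * |(m:ℝ)| := by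
      calc 2*γ*(h-l)*(m:ℝ) ≤ |2*γ*(h-l)*(m:ℝ)| := le_abs_self _
        _ = 2*(|γ|)*(h-l) * |(m:ℝ)| := by
            rw [abs_mul, abs_mul, abs_mul, abs_two, abs_of_nonneg (show (0:ℝ) ≤ h-l by linarith)]
    have b2 : 2*γ*l ≤ 2*(|γ|)*(|l|) := by
      calc 2*γ*l ≤ |2*γ*l| := le_abs_self _
        _ = 2*(|γ|)*(|l|) := by rw [abs_mul, abs_mul, abs_two]
    linarith
  have p1 := term_bound (τmax := 2*τ0) (d := h-l) (R := 3*(|l|)+(|h|)+4*(|γ|)*τ0) m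
    hmin ht1 ht2 hd hR zero_le_one hC hE1
    (Or.inl (rfl : c' - γ*t + 2*(h-l)*(m:ℝ) = (c' - γ*t) + 2*(h-l)*(m:ℝ)))
    hv1 (hφ _ t ht1)
  have p2 := term_bound (τmax := 2*τ0) (d := h-l) (R := 3*(|l|)+(|h|)+4*(|γ|)*τ0) m
    hmin ht1 ht2 hd hR (Real.exp_pos _).le hC hE2
    (Or.inr (rfl : c' - γ*t - 2*l - 2*(h-l)*(m:ℝ) = (c' - γ*t - 2*l) - 2*(h-l)*(m:ℝ)))
    hv2 (hφ _ t ht1)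
  calc |Real.exp (2*γ*(l-h)*(m:ℝ)) * φ (c' - γ*t + 2*(h-l)*(m:ℝ)) t
      - Real.exp (2*γ*((h-l)*(m:ℝ)+l)) * φ (c' - γ*t - 2*l - 2*(h-l)*(m:ℝ)) t|
      ≤ |Real.exp (2*γ*(l-h)*(m:ℝ)) * φ (c' - γ*t + 2*(h-l)*(m:ℝ)) t|
        + |Real.exp (2*γ*((h-l)*(m:ℝ)+l)) * φ (c' - γ*t - 2*l - 2*(h-l)*(m:ℝ)) t| := abs_sub _ _
    _ ≤ _ := by
        refine le_trans (add_le_add p1 p2) (le_of_eq ?_)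
        ring


/-- the two-sided reflection series `F(c,τ)` satisfies the
advection–diffusion equation `∂F/∂τ + γ·∂F/∂c = (1/2)·∂²F/∂c²` for every
`τ > 0` and `l < c < h`. -/
theorem two_sided_reflection_series_satisfies_advection_diffusion
    (γ h l : ℝ) (hh : 0 < h) (hl : l < 0)
    (F : ℝ → ℝ → ℝ)
    (hF : ∀ c τ : ℝ, F c τ = ∑' m : ℤ, reflTerm γ h l c τ m) :
    ∀ (c τ : ℝ), 0 < τ → l < c → c < h →
      deriv (fun τ' => F c τ') τ + γ * deriv (fun c' => F c' τ) c
        = (1 / 2) * deriv (fun c' => deriv (fun c'' => F c'' τ) c') c := by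
  intro c τ hτ hlc hch
  have hd : 0 < h - l := by linarith
  have hb : 0 < (h-l)^2/(2*τ) := by positivity
  -- the summable bound families
  set uK : ℤ → ℝ := fun m =>
    ((1 + Real.exp (2*(|γ|)*(|l|))) * 1
          * (1+8*(h-l)^2+2*(3*(|l|)+(|h|)+4*(|γ|)*τ)^2)
          * Real.exp ((3*(|l|)+(|h|)+4*(|γ|)*τ)^2/(2*(2*τ))) / Real.sqrt (2*Real.pi*(τ/2)))
      * ((1 + (m:ℝ)^2) *
          Real.exp (2*(|γ|)*(h-l) * |(m:ℝ)| - (h-l)^2/(2*τ) * (m:ℝ)^2)) with huK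
  set uC : ℤ → ℝ := fun m =>
    ((1 + Real.exp (2*(|γ|)*(|l|))) * (1/(τ/2))
          * (1+8*(h-l)^2+2*(3*(|l|)+(|h|)+4*(|γ|)*τ)^2)
          * Real.exp ((3*(|l|)+(|h|)+4*(|γ|)*τ)^2/(2*(2*τ))) / Real.sqrt (2*Real.pi*(τ/2)))
      * ((1 + (m:ℝ)^2) *
          Real.exp (2*(|γ|)*(h-l) * |(m:ℝ)| - (h-l)^2/(2*τ) * (m:ℝ)^2)) with huC
  set uCC : ℤ → ℝ := fun m =>
    ((1 + Real.exp (2*(|γ|)*(|l|))) * (1/(τ/2)^2 + 1/(τ/2))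
          * (1+8*(h-l)^2+2*(3*(|l|)+(|h|)+4*(|γ|)*τ)^2)
          * Real.exp ((3*(|l|)+(|h|)+4*(|γ|)*τ)^2/(2*(2*τ))) / Real.sqrt (2*Real.pi*(τ/2)))
      * ((1 + (m:ℝ)^2) *
          Real.exp (2*(|γ|)*(h-l) * |(m:ℝ)| - (h-l)^2/(2*τ) * (m:ℝ)^2)) with huCC
  set uT : ℤ → ℝ := fun m =>
    ((1 + Real.exp (2*(|γ|)*(|l|))) * ((|γ|)/(τ/2) + 1/(τ/2)^2 + 1/(τ/2))
          * (1+8*(h-l)^2+2*(3*(|l|)+(|h|)+4*(|γ|)*τ)^2)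
          * Real.exp ((3*(|l|)+(|h|)+4*(|γ|)*τ)^2/(2*(2*τ))) / Real.sqrt (2*Real.pi*(τ/2)))
      * ((1 + (m:ℝ)^2) *
          Real.exp (2*(|γ|)*(h-l) * |(m:ℝ)| - (h-l)^2/(2*τ) * (m:ℝ)^2)) with huT
  have suK : Summable uK := summable_poly_exp _ _ _ hb
  have suC : Summable uC := summable_poly_exp _ _ _ hb
  have suCC : Summable uCC := summable_poly_exp _ _ _ hb
  have suT : Summable uT := summable_poly_exp _ _ _ hb
  have hmin : 0 < τ/2 := by linarith
  -- bounds
  have bK : ∀ (m : ℤ) (y : ℝ), y ∈ Set.Ioo l h → ‖reflTerm γ h l y τ m‖ ≤ uK m := by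
    intro m y hy
    rw [Real.norm_eq_abs, huK]
    unfold reflTerm
    exact refl_bound hh hl hτ zero_le_one gker
      (fun x t htt => abs_gker_le hmin htt x) m hy.1.le hy.2.le
      (by linarith) (by linarith)
  have bC : ∀ (m : ℤ) (y : ℝ), y ∈ Set.Ioo l h → ‖dC γ h l y τ m‖ ≤ uC m := by
    intro m y hy
    rw [Real.norm_eq_abs, huC]
    unfold dC
    exact refl_bound hh hl hτ (by positivity) gd1
      (fun x t htt => abs_gd1_le hmin htt x) m hy.1.le hy.2.le
      (by linarith) (by linarith)
  have bCC : ∀ (m : ℤ) (y : ℝ), y ∈ Set.Ioo l h → ‖dCC γ h l y τ m‖ ≤ uCC m := by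
    intro m y hy
    rw [Real.norm_eq_abs, huCC]
    unfold dCC
    exact refl_bound hh hl hτ (by positivity) gd2
      (fun x t htt => abs_gd2_le hmin htt x) m hy.1.le hy.2.le
      (by linarith) (by linarith)
  have bT : ∀ (m : ℤ) (y : ℝ), y ∈ Set.Ioo (τ/2) (2*τ) → ‖dT γ h l c y m‖ ≤ uT m := by
    intro m y hy
    rw [Real.norm_eq_abs, huT]
    unfold dT
    exact refl_bound hh hl hτ (by positivity) (gdt γ)
      (fun x t htt => abs_gdt_le γ hmin htt x) m hlc.le hch.le
      hy.1.le hy.2.le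
  have Hmem : c ∈ Set.Ioo l h := ⟨hlc, hch⟩
  have HmemT : τ ∈ Set.Ioo (τ/2) (2*τ) := ⟨by linarith, by linarith⟩
  have Summable0 : Summable (fun m : ℤ => reflTerm γ h l c τ m) :=
    Summable.of_norm_bounded suK (fun m => bK m c Hmem)
  have SummableDC : Summable (fun m : ℤ => dC γ h l c τ m) :=
    Summable.of_norm_bounded suC (fun m => bC m c Hmem)
  have SummableDT : Summable (fun m : ℤ => dT γ h l c τ m) :=
    Summable.of_norm_bounded suT (fun m => bT m τ HmemT)
  -- derivative of the series in c, at every point of Ioo l h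
  have HCat : ∀ y ∈ Set.Ioo l h,
      HasDerivAt (fun c' => ∑' m : ℤ, reflTerm γ h l c' τ m)
        (∑' m : ℤ, dC γ h l y τ m) y := by
    intro y hy
    exact hasDerivAt_tsum_of_isPreconnected suC isOpen_Ioo isPreconnected_Ioo
      (fun m z _ => hasDerivAt_reflTerm_c γ h l τ hτ m z)
      (fun m z hz => bC m z hz) Hmem Summable0 hy
  have HC := HCat c Hmem
  have HT : HasDerivAt (fun t => ∑' m : ℤ, reflTerm γ h l c t m)
      (∑' m : ℤ, dT γ h l c τ m) τ :=
    hasDerivAt_tsum_of_isPreconnected suT isOpen_Ioo isPreconnected_Ioo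
      (fun m z hz => hasDerivAt_reflTerm_t γ h l c m z (by have := hz.1; simp only [Set.mem_Ioo] at hz; linarith [hz.1]))
      (fun m z hz => bT m z hz) HmemT Summable0 HmemT
  have HCC : HasDerivAt (fun c' => ∑' m : ℤ, dC γ h l c' τ m)
      (∑' m : ℤ, dCC γ h l c τ m) c :=
    hasDerivAt_tsum_of_isPreconnected suCC isOpen_Ioo isPreconnected_Ioo
      (fun m z _ => hasDerivAt_dC_c γ h l τ hτ m z)
      (fun m z hz => bCC m z hz) Hmem SummableDC Hmem
  -- identify the three derivatives
  have hFc : (fun c' => F c' τ) = (fun c' => ∑' m : ℤ, reflTerm γ h l c' τ m) :=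
    funext fun c' => hF c' τ
  have hFt : (fun t => F c t) = (fun t => ∑' m : ℤ, reflTerm γ h l c t m) :=
    funext fun t => hF c t
  have deriv1 : deriv (fun τ' => F c τ') τ = ∑' m : ℤ, dT γ h l c τ m := by
    rw [hFt]; exact HT.deriv
  have deriv2 : deriv (fun c' => F c' τ) c = ∑' m : ℤ, dC γ h l c τ m := by
    rw [hFc]; exact HC.deriv
  have deriv3 : deriv (fun c' => deriv (fun c'' => F c'' τ) c') c
      = ∑' m : ℤ, dCC γ h l c τ m := by
    have hev : (fun c' => deriv (fun c'' => F c'' τ) c')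
        =ᶠ[nhds c] (fun c' => ∑' m : ℤ, dC γ h l c' τ m) := by
      filter_upwards [Ioo_mem_nhds hlc hch] with y hy
      rw [hFc]
      exact (HCat y hy).deriv
    rw [hev.deriv_eq]
    exact HCC.deriv
  rw [deriv1, deriv2, deriv3]
  calc (∑' m : ℤ, dT γ h l c τ m) + γ * ∑' m : ℤ, dC γ h l c τ m
      = (∑' m : ℤ, dT γ h l c τ m) + ∑' m : ℤ, γ * dC γ h l c τ m := by
        rw [tsum_mul_left]
    _ = ∑' m : ℤ, (dT γ h l c τ m + γ * dC γ h l c τ m) :=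
        (Summable.tsum_add SummableDT (SummableDC.mul_left γ)).symm
    _ = ∑' m : ℤ, (1/2) * dCC γ h l c τ m := tsum_congr (fun m => term_pde γ h l c τ m)
    _ = (1/2) * ∑' m : ℤ, dCC γ h l c τ m := tsum_mul_left
end

section
/- Let g(x,τ) = (2πτ)^{-1/2}·exp(−x²/(2τ)), f(c;γ) = (2π)^{-1/2}·exp(−(c−γ)²/2), and for h > 0, l < 0, l < c < h define F(c,h,l;γ) = Σ_{m∈ℤ} [ e^{2γ(l−h)m}·g(c − γ + 2(h−l)m, 1) − e^{2γ((h−l)m + l)}·g(c − γ − 2l − 2(h−l)m, 1) ]. Then the mixed second partial derivative satisfies −∂²F/∂h∂l = f(c;γ)·𝓡(h,l|c), where 𝓡(h,l|c) = 4·Σ_{m∈ℤ} m·[ m·𝒟(m(h−l), c) + (1−m)·𝒟(m(h−l)+l, c) ] and 𝒟(h,c) = ((c−2h)² − 1)·e^{2h(c−h)}. In particular, the joint probability density of the high, low and close values (H̄, L̄, C̄) of the Wiener process with drift γ and unit volatility on the unit time interval is Q̄(h,l,c;γ) = f(c;γ)·𝓡(h,l|c) on the region h > 0, l < 0, l < c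 < h. -/
/-- The density of the close value: `f(c;γ) = (2π)^{-1/2}·exp(−(c−γ)²/2)`. -/
noncomputable def fclose (c γ : ℝ) : ℝ :=
  Real.exp (-(c - γ) ^ 2 / 2) / Real.sqrt (2 * Real.pi)

/-- `𝒟(h,c) = ((c−2h)² − 1)·e^{2h(c−h)}`. -/
noncomputable def Dfun (h c : ℝ) : ℝ :=
  ((c - 2 * h) ^ 2 - 1) * Real.exp (2 * h * (c - h))

/-- The conditional joint density of the high and low given the close:
`𝓡(h,l|c) = 4·Σ_{m∈ℤ} m·[m·𝒟(m(h−l),c) + (1−m)·𝒟(m(h−l)+l,c)]`. -/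
noncomputable def Rcond (h l c : ℝ) : ℝ :=
  4 * ∑' m : ℤ, (m : ℝ) * ((m : ℝ) * Dfun ((m : ℝ) * (h - l)) c
    + (1 - (m : ℝ)) * Dfun ((m : ℝ) * (h - l) + l) c)

/-- The two-sided reflection solution at time `τ = 1`, as a function of `(c,h,l)`:
`F(c,h,l;γ) = Σ_{m∈ℤ} [e^{2γ(l−h)m}·g(c−γ+2(h−l)m, 1) − e^{2γ((h−l)m+l)}·g(c−γ−2l−2(h−l)m, 1)]`. -/
noncomputable def Fser (γ c h l : ℝ) : ℝ :=
  ∑' m : ℤ,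
    (Real.exp (2 * γ * (l - h) * (m : ℝ)) * gker (c - γ + 2 * (h - l) * (m : ℝ)) 1
      - Real.exp (2 * γ * ((h - l) * (m : ℝ) + l))
          * gker (c - γ - 2 * l - 2 * (h - l) * (m : ℝ)) 1)

set_option linter.unusedSectionVars false

open Real Filter

lemma summable_gauss_nat (ε : ℝ) (hε : 0 < ε) (k : ℕ) :
    Summable (fun n : ℕ => (1 + (n:ℝ))^k * Real.exp (-ε * (n:ℝ)^2)) := by
  apply summable_of_ratio_norm_eventually_le (r := 1/2) (by norm_num)
  have h1 : Tendsto (fun n:ℕ => (2*(n:ℝ)+1)) atTop atTop := by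
    apply tendsto_atTop_add_const_right
    exact (tendsto_natCast_atTop_atTop).const_mul_atTop two_pos
  have h2 : Tendsto (fun n:ℕ => Real.exp (-(ε*(2*(n:ℝ)+1)))) atTop (nhds 0) :=
    Real.tendsto_exp_atBot.comp (tendsto_neg_atTop_atBot.comp (h1.const_mul_atTop hε))
  have h3 : ∀ᶠ n : ℕ in atTop, Real.exp (-(ε*(2*(n:ℝ)+1))) < 1/2/2^k := by
    apply h2.eventually_lt_const
    positivity
  filter_upwards [h3] with n hn
  have e1 : -ε * ((n:ℝ)+1)^2 = -ε * (n:ℝ)^2 + (-(ε*(2*(n:ℝ)+1))) := by ring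
  rw [Real.norm_of_nonneg (by positivity), Real.norm_of_nonneg (by positivity)]
  push_cast
  rw [e1, Real.exp_add]
  have hb : (1 + ((n:ℝ)+1))^k ≤ 2^k * (1+(n:ℝ))^k := by
    rw [← mul_pow]
    apply pow_le_pow_left₀ (by positivity) (by linarith)
  calc (1 + ((n:ℝ)+1))^k * (Real.exp (-ε * (n:ℝ)^2) * Real.exp (-(ε*(2*(n:ℝ)+1))))
      ≤ (2^k * (1+(n:ℝ))^k) * (Real.exp (-ε * (n:ℝ)^2) * (1/2/2^k)) := by
        apply mul_le_mul hb _ (by positivity) (by positivity)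
        apply mul_le_mul_of_nonneg_left hn.le (by positivity)
    _ = 1/2 * ((1+(n:ℝ))^k * Real.exp (-ε * (n:ℝ)^2)) := by
        field_simp

lemma summable_gauss_int (ε : ℝ) (hε : 0 < ε) (k : ℕ) :
    Summable (fun m : ℤ => (1 + |(m:ℝ)|)^k * Real.exp (-ε * (m:ℝ)^2)) := by
  apply Summable.of_nat_of_neg
  · refine (summable_gauss_nat ε hε k).congr (fun n => ?_)
    push_cast
    rw [abs_of_nonneg (Nat.cast_nonneg n)]
  · refine (summable_gauss_nat ε hε k).congr (fun n => ?_)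
    push_cast
    rw [abs_neg, abs_of_nonneg (Nat.cast_nonneg n)]
    ring_nf

/-- auxiliary exponential `E(u) = exp(2u(c-u))` -/
noncomputable def Ee (c u : ℝ) : ℝ := Real.exp (2*u*(c-u))
noncomputable def Ee₁ (c u : ℝ) : ℝ := (2*c - 4*u) * Ee c u
noncomputable def Ee₂ (c u : ℝ) : ℝ := ((2*c - 4*u)^2 - 4) * Ee c u

lemma hasDerivAt_Ee (c u : ℝ) : HasDerivAt (fun x => Ee c x) (Ee₁ c u) u := by
  have h : HasDerivAt (fun u : ℝ => 2*u*(c-u)) (2*c - 4*u) u := by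
    have h2 := ((hasDerivAt_id u).const_mul 2).mul ((hasDerivAt_const u c).sub (hasDerivAt_id u))
    refine h2.congr_deriv ?_
    simp; ring
  have h3 := h.exp
  simp only [Ee₁, Ee]
  convert h3 using 1
  ring

lemma hasDerivAt_Ee₁ (c u : ℝ) : HasDerivAt (fun x => Ee₁ c x) (Ee₂ c u) u := by
  have h1 : HasDerivAt (fun u : ℝ => 2*c - 4*u) (-4) u := by
    simpa using ((hasDerivAt_id u).const_mul 4).const_sub (2*c)
  have h2 := h1.mul (hasDerivAt_Ee c u)
  simp only [Ee₁, Ee₂]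
  refine h2.congr_deriv ?_
  simp only [Ee₁]
  ring

lemma Ee₂_eq (c u : ℝ) : Ee₂ c u = 4 * Dfun u c := by
  simp only [Ee₂, Dfun, Ee]
  ring_nf

lemma Ee_le (c u : ℝ) : Ee c u ≤ Real.exp (c^2) * Real.exp (-u^2) := by
  rw [← Real.exp_add, Ee, Real.exp_le_exp]
  nlinarith [sq_nonneg (u - c)]

lemma Ee_pos (c u : ℝ) : 0 < Ee c u := Real.exp_pos _

/-- per-term rewriting of the series -/
lemma term_eq (γ c h l : ℝ) (m : ℤ) :
    Real.exp (2 * γ * (l - h) * (m : ℝ)) * gker (c - γ + 2 * (h - l) * (m : ℝ)) 1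
      - Real.exp (2 * γ * ((h - l) * (m : ℝ) + l))
          * gker (c - γ - 2 * l - 2 * (h - l) * (m : ℝ)) 1
    = fclose c γ * (Ee c ((m:ℝ)*(l-h)) - Ee c ((m:ℝ)*(h-l)+l)) := by
  simp only [gker, fclose, Ee, mul_one]
  have e1 : ∀ A B : ℝ, Real.exp A * (Real.exp B / Real.sqrt (2*Real.pi))
      = Real.exp (A+B) / Real.sqrt (2*Real.pi) := fun A B => by
    rw [← mul_div_assoc, ← Real.exp_add]
  have e2 : ∀ A B : ℝ, Real.exp A / Real.sqrt (2*Real.pi) * Real.exp B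
      = Real.exp (A+B) / Real.sqrt (2*Real.pi) := fun A B => by
    rw [div_mul_eq_mul_div, ← Real.exp_add]
  simp only [mul_sub, e1, e2]
  congr 2 <;> ring

noncomputable def Gl (c : ℝ) (m : ℤ) (h' l' : ℝ) : ℝ :=
  (m:ℝ) * Ee₁ c ((m:ℝ)*(l'-h')) - (1-(m:ℝ)) * Ee₁ c ((m:ℝ)*(h'-l')+l')
noncomputable def Ghl (c : ℝ) (m : ℤ) (h' l' : ℝ) : ℝ :=
  -((m:ℝ)^2) * Ee₂ c ((m:ℝ)*(l'-h')) - (m:ℝ)*(1-(m:ℝ)) * Ee₂ c ((m:ℝ)*(h'-l')+l')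

lemma hasDerivAt_term_l (c : ℝ) (m : ℤ) (h' l' : ℝ) :
    HasDerivAt (fun x => Ee c ((m:ℝ)*(x-h')) - Ee c ((m:ℝ)*(h'-x)+x)) (Gl c m h' l') l' := by
  have i1 : HasDerivAt (fun x : ℝ => (m:ℝ)*(x-h')) (m:ℝ) l' := by
    simpa using ((hasDerivAt_id l').sub_const h').const_mul (m:ℝ)
  have i2 : HasDerivAt (fun x : ℝ => (m:ℝ)*(h'-x)+x) (1-(m:ℝ)) l' := by
    have := (((hasDerivAt_const l' h').sub (hasDerivAt_id l')).const_mul (m:ℝ)).add (hasDerivAt_id l')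
    refine this.congr_deriv ?_
    simp; ring
  have d1 := (hasDerivAt_Ee c ((m:ℝ)*(l'-h'))).comp l' i1
  have d2 := HasDerivAt.comp (h := fun x : ℝ => (m:ℝ)*(h'-x)+x) l' (hasDerivAt_Ee c ((m:ℝ)*(h'-l')+l')) i2
  have := d1.sub d2
  refine this.congr_deriv ?_
  simp only [Gl]; ring

lemma hasDerivAt_term_h (c : ℝ) (m : ℤ) (l' h' : ℝ) :
    HasDerivAt (fun x => Gl c m x l') (Ghl c m h' l') h' := by
  have i1 : HasDerivAt (fun x : ℝ => (m:ℝ)*(l'-x)) (-(m:ℝ)) h' := by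
    have := ((hasDerivAt_const h' l').sub (hasDerivAt_id h')).const_mul (m:ℝ)
    refine this.congr_deriv ?_
    simp
  have i2 : HasDerivAt (fun x : ℝ => (m:ℝ)*(x-l')+l') (m:ℝ) h' := by
    have := (((hasDerivAt_id h').sub_const l').const_mul (m:ℝ)).add_const l'
    refine this.congr_deriv ?_
    simp
  have d1 := ((hasDerivAt_Ee₁ c ((m:ℝ)*(l'-h'))).comp h' i1).const_mul (m:ℝ)
  have d2 := (HasDerivAt.comp (h := fun x : ℝ => (m:ℝ)*(x-l')+l') h' (hasDerivAt_Ee₁ c ((m:ℝ)*(h'-l')+l')) i2).const_mul (1-(m:ℝ))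
  have := d1.sub d2
  refine this.congr_deriv ?_
  simp only [Ghl]; ring

section bounds
variable (c B Δ δ : ℝ) (m : ℤ) (h' l' : ℝ)

lemma Ee_le_gauss (K q : ℝ) (u : ℝ) (hq : q ≤ u^2 + K) :
    Ee c u ≤ Real.exp (c^2 + K) * Real.exp (-q) := by
  rw [← Real.exp_add, Ee, Real.exp_le_exp]
  nlinarith [sq_nonneg (u - c)]

variable (hδ : 0 < δ) (h1 : δ ≤ h' - l') (h2 : h' - l' ≤ Δ) (h3 : |l'| ≤ B)

include hδ h1 in
lemma quad_a : (δ^2/2) * (m:ℝ)^2 ≤ ((m:ℝ)*(l'-h'))^2 := by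
  have key : δ*δ ≤ (h'-l')*(h'-l') := mul_le_mul h1 h1 hδ.le (by linarith)
  nlinarith [mul_le_mul_of_nonneg_left key (sq_nonneg (m:ℝ)), sq_nonneg (m:ℝ)]

include hδ h1 h3 in
lemma quad_b : (δ^2/2) * (m:ℝ)^2 ≤ ((m:ℝ)*(h'-l')+l')^2 + B^2 := by
  have key : δ*δ ≤ (h'-l')*(h'-l') := mul_le_mul h1 h1 hδ.le (by linarith)
  have hB : l'^2 ≤ B^2 := by
    have := abs_nonneg l'
    nlinarith [sq_abs l']
  nlinarith [sq_nonneg ((m:ℝ)*(h'-l') + 2*l'),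
    mul_le_mul_of_nonneg_left key (sq_nonneg (m:ℝ))]

include hδ h1 h3 in
lemma Ee_bound_a : Ee c ((m:ℝ)*(l'-h')) ≤ Real.exp (c^2+B^2) * Real.exp (-((δ^2/2)*(m:ℝ)^2)) := by
  refine Ee_le_gauss c (B^2) _ _ ?_
  have h5 : (0:ℝ) ≤ B := le_trans (abs_nonneg l') h3
  have := quad_a δ m h' l' hδ h1
  nlinarith

include hδ h1 h3 in
lemma Ee_bound_b : Ee c ((m:ℝ)*(h'-l')+l') ≤ Real.exp (c^2+B^2) * Real.exp (-((δ^2/2)*(m:ℝ)^2)) := by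
  refine Ee_le_gauss c (B^2) _ _ ?_
  linarith [quad_b B δ m h' l' hδ h1 h3]

include hδ h1 h2 h3 in
lemma absu_a : |(m:ℝ)*(l'-h')| ≤ (Δ + B) * (1+|(m:ℝ)|) := by
  have hΔ : (0:ℝ) < Δ := lt_of_lt_of_le hδ (h1.trans h2)
  have h5 : (0:ℝ) ≤ B := le_trans (abs_nonneg l') h3
  rw [abs_mul, abs_sub_comm, abs_of_nonneg (by linarith : (0:ℝ) ≤ h' - l')]
  have h4 : 0 ≤ |(m:ℝ)| := abs_nonneg _
  nlinarith [mul_le_mul_of_nonneg_left h2 h4]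

include hδ h1 h2 h3 in
lemma absu_b : |(m:ℝ)*(h'-l')+l'| ≤ (Δ + B) * (1+|(m:ℝ)|) := by
  have hΔ : (0:ℝ) < Δ := lt_of_lt_of_le hδ (h1.trans h2)
  have h4 : 0 ≤ |(m:ℝ)| := abs_nonneg _
  have h5 : (0:ℝ) ≤ B := le_trans (abs_nonneg l') h3
  calc |(m:ℝ)*(h'-l')+l'| ≤ |(m:ℝ)*(h'-l')| + |l'| := abs_add_le _ _
    _ ≤ |(m:ℝ)| * Δ + B := by
        rw [abs_mul, abs_of_nonneg (by linarith : (0:ℝ) ≤ h' - l')]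
        have := mul_le_mul_of_nonneg_left h2 h4
        linarith
    _ ≤ (Δ + B) * (1+|(m:ℝ)|) := by nlinarith

include hδ h1 h2 h3 in
lemma lin_bound (u : ℝ) (hu : |u| ≤ (Δ + B) * (1+|(m:ℝ)|)) :
    |2*c-4*u| ≤ (2*|c|+4*(Δ+B)) * (1+|(m:ℝ)|) := by
  have hΔ : (0:ℝ) < Δ := lt_of_lt_of_le hδ (h1.trans h2)
  have h4 : 0 ≤ |(m:ℝ)| := abs_nonneg _
  have h5 : (0:ℝ) ≤ B := le_trans (abs_nonneg l') h3
  calc |2*c-4*u| ≤ |2*c| + |4*u| := abs_sub _ _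
    _ = 2*|c| + 4*|u| := by rw [abs_mul, abs_mul]; norm_num
    _ ≤ (2*|c|+4*(Δ+B)) * (1+|(m:ℝ)|) := by nlinarith [abs_nonneg c]

include hδ h1 h2 h3 in
lemma Ee₁_bound_a : |Ee₁ c ((m:ℝ)*(l'-h'))|
    ≤ (2*|c|+4*(Δ+B)) * (1+|(m:ℝ)|) * (Real.exp (c^2+B^2) * Real.exp (-((δ^2/2)*(m:ℝ)^2))) := by
  have e1 : |Ee₁ c ((m:ℝ)*(l'-h'))| = |2*c-4*((m:ℝ)*(l'-h'))| * Ee c ((m:ℝ)*(l'-h')) := by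
    rw [Ee₁, abs_mul, abs_of_pos (Ee_pos _ _)]
  rw [e1]
  have e2 := lin_bound c B Δ δ m h' l' hδ h1 h2 h3 _ (absu_a B Δ δ m h' l' hδ h1 h2 h3)
  exact mul_le_mul e2 (Ee_bound_a c B δ m h' l' hδ h1 h3) (Ee_pos _ _).le
    (le_trans (abs_nonneg _) e2)

include hδ h1 h2 h3 in
lemma Ee₁_bound_b : |Ee₁ c ((m:ℝ)*(h'-l')+l')|
    ≤ (2*|c|+4*(Δ+B)) * (1+|(m:ℝ)|) * (Real.exp (c^2+B^2) * Real.exp (-((δ^2/2)*(m:ℝ)^2))) := by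
  have e1 : |Ee₁ c ((m:ℝ)*(h'-l')+l')| = |2*c-4*((m:ℝ)*(h'-l')+l')| * Ee c ((m:ℝ)*(h'-l')+l') := by
    rw [Ee₁, abs_mul, abs_of_pos (Ee_pos _ _)]
  rw [e1]
  have e2 := lin_bound c B Δ δ m h' l' hδ h1 h2 h3 _ (absu_b B Δ δ m h' l' hδ h1 h2 h3)
  exact mul_le_mul e2 (Ee_bound_b c B δ m h' l' hδ h1 h3) (Ee_pos _ _).le
    (le_trans (abs_nonneg _) e2)

include hδ h1 h2 h3 in
lemma quad_bound (u : ℝ) (hu : |u| ≤ (Δ + B) * (1+|(m:ℝ)|)) :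
    |(2*c-4*u)^2-4| ≤ ((2*|c|+4*(Δ+B))^2+4) * (1+|(m:ℝ)|)^2 := by
  have h4 : 0 ≤ |(m:ℝ)| := abs_nonneg _
  have h6 := lin_bound c B Δ δ m h' l' hδ h1 h2 h3 u hu
  have h7 : (2*c-4*u)^2 ≤ (2*|c|+4*(Δ+B))^2 * (1+|(m:ℝ)|)^2 := by
    rw [← mul_pow, ← sq_abs (2*c-4*u)]
    exact pow_le_pow_left₀ (abs_nonneg _) h6 2
  calc |(2*c-4*u)^2-4| ≤ (2*c-4*u)^2 + 4 := by
        have := sq_nonneg (2*c-4*u); rw [abs_le]; constructor <;> linarith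
    _ ≤ ((2*|c|+4*(Δ+B))^2+4) * (1+|(m:ℝ)|)^2 := by nlinarith [sq_nonneg (1+|(m:ℝ)|)]

include hδ h1 h2 h3 in
lemma Ee₂_bound_a : |Ee₂ c ((m:ℝ)*(l'-h'))|
    ≤ ((2*|c|+4*(Δ+B))^2+4) * (1+|(m:ℝ)|)^2 * (Real.exp (c^2+B^2) * Real.exp (-((δ^2/2)*(m:ℝ)^2))) := by
  have e1 : |Ee₂ c ((m:ℝ)*(l'-h'))| = |(2*c-4*((m:ℝ)*(l'-h')))^2-4| * Ee c ((m:ℝ)*(l'-h')) := by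
    rw [Ee₂, abs_mul, abs_of_pos (Ee_pos _ _)]
  rw [e1]
  have e2 := quad_bound c B Δ δ m h' l' hδ h1 h2 h3 _ (absu_a B Δ δ m h' l' hδ h1 h2 h3)
  exact mul_le_mul e2 (Ee_bound_a c B δ m h' l' hδ h1 h3) (Ee_pos _ _).le
    (le_trans (abs_nonneg _) e2)

include hδ h1 h2 h3 in
lemma Ee₂_bound_b : |Ee₂ c ((m:ℝ)*(h'-l')+l')|
    ≤ ((2*|c|+4*(Δ+B))^2+4) * (1+|(m:ℝ)|)^2 * (Real.exp (c^2+B^2) * Real.exp (-((δ^2/2)*(m:ℝ)^2))) := by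
  have e1 : |Ee₂ c ((m:ℝ)*(h'-l')+l')| = |(2*c-4*((m:ℝ)*(h'-l')+l'))^2-4| * Ee c ((m:ℝ)*(h'-l')+l') := by
    rw [Ee₂, abs_mul, abs_of_pos (Ee_pos _ _)]
  rw [e1]
  have e2 := quad_bound c B Δ δ m h' l' hδ h1 h2 h3 _ (absu_b B Δ δ m h' l' hδ h1 h2 h3)
  exact mul_le_mul e2 (Ee_bound_b c B δ m h' l' hδ h1 h3) (Ee_pos _ _).le
    (le_trans (abs_nonneg _) e2)

end bounds


section asm
variable (c B Δ δ : ℝ) (m : ℤ) (h' l' : ℝ)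
  (hδ : 0 < δ) (h1 : δ ≤ h' - l') (h2 : h' - l' ≤ Δ) (h3 : |l'| ≤ B)

include hδ h1 h2 h3 in
lemma term_bound_s12 : ‖Ee c ((m:ℝ)*(l'-h')) - Ee c ((m:ℝ)*(h'-l')+l')‖
    ≤ 2 * ((1+|(m:ℝ)|)^0 * (Real.exp (c^2+B^2) * Real.exp (-((δ^2/2)*(m:ℝ)^2)))) := by
  rw [Real.norm_eq_abs, pow_zero, one_mul]
  have ba := Ee_bound_a c B δ m h' l' hδ h1 h3
  have bb := Ee_bound_b c B δ m h' l' hδ h1 h3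
  have pa := Ee_pos c ((m:ℝ)*(l'-h'))
  have pb := Ee_pos c ((m:ℝ)*(h'-l')+l')
  rw [abs_le]; constructor <;> nlinarith

include hδ h1 h2 h3 in
lemma Gl_bound : ‖Gl c m h' l'‖
    ≤ (2*(2*|c|+4*(Δ+B))) * ((1+|(m:ℝ)|)^2 * (Real.exp (c^2+B^2) * Real.exp (-((δ^2/2)*(m:ℝ)^2)))) := by
  rw [Real.norm_eq_abs]
  have hm1 : |(m:ℝ)| ≤ 1 + |(m:ℝ)| := by linarith [abs_nonneg (m:ℝ)]
  have hm2 : |1-(m:ℝ)| ≤ 1 + |(m:ℝ)| := by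
    calc |1-(m:ℝ)| ≤ |(1:ℝ)| + |(m:ℝ)| := abs_sub _ _
      _ = 1 + |(m:ℝ)| := by rw [abs_one]
  have ba := Ee₁_bound_a c B Δ δ m h' l' hδ h1 h2 h3
  have bb := Ee₁_bound_b c B Δ δ m h' l' hδ h1 h2 h3
  have hpos : (0:ℝ) ≤ 1 + |(m:ℝ)| := by positivity
  calc |Gl c m h' l'| ≤ |(m:ℝ)| * |Ee₁ c ((m:ℝ)*(l'-h'))| + |1-(m:ℝ)| * |Ee₁ c ((m:ℝ)*(h'-l')+l')| := by
        rw [Gl, ← abs_mul, ← abs_mul]; exact abs_sub _ _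
    _ ≤ (1+|(m:ℝ)|) * ((2*|c|+4*(Δ+B)) * (1+|(m:ℝ)|) * (Real.exp (c^2+B^2) * Real.exp (-((δ^2/2)*(m:ℝ)^2))))
        + (1+|(m:ℝ)|) * ((2*|c|+4*(Δ+B)) * (1+|(m:ℝ)|) * (Real.exp (c^2+B^2) * Real.exp (-((δ^2/2)*(m:ℝ)^2)))) := by
        apply add_le_add
        · exact mul_le_mul hm1 ba (abs_nonneg _) hpos
        · exact mul_le_mul hm2 bb (abs_nonneg _) hpos
    _ = (2*(2*|c|+4*(Δ+B))) * ((1+|(m:ℝ)|)^2 * (Real.exp (c^2+B^2) * Real.exp (-((δ^2/2)*(m:ℝ)^2)))) := by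
        ring

include hδ h1 h2 h3 in
lemma Ghl_bound : ‖Ghl c m h' l'‖
    ≤ (2*((2*|c|+4*(Δ+B))^2+4)) * ((1+|(m:ℝ)|)^4 * (Real.exp (c^2+B^2) * Real.exp (-((δ^2/2)*(m:ℝ)^2)))) := by
  rw [Real.norm_eq_abs]
  have hm0 : (0:ℝ) ≤ 1 + |(m:ℝ)| := by positivity
  have hm1 : |(-((m:ℝ)^2))| ≤ (1 + |(m:ℝ)|)^2 := by
    rw [abs_neg, abs_pow, ← sq_abs]
    apply pow_le_pow_left₀ (abs_nonneg _)
    rw [abs_abs]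
    linarith [abs_nonneg (m:ℝ)]
  have hm2 : |(m:ℝ)*(1-(m:ℝ))| ≤ (1 + |(m:ℝ)|)^2 := by
    rw [abs_mul]
    have a1 : |(m:ℝ)| ≤ 1 + |(m:ℝ)| := by linarith [abs_nonneg (m:ℝ)]
    have a2 : |1-(m:ℝ)| ≤ 1 + |(m:ℝ)| := by
      calc |1-(m:ℝ)| ≤ |(1:ℝ)| + |(m:ℝ)| := abs_sub _ _
        _ = 1 + |(m:ℝ)| := by rw [abs_one]
    calc |(m:ℝ)| * |1-(m:ℝ)| ≤ (1 + |(m:ℝ)|) * (1 + |(m:ℝ)|) :=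
          mul_le_mul a1 a2 (abs_nonneg _) hm0
      _ = (1 + |(m:ℝ)|)^2 := (sq _).symm
  have ba := Ee₂_bound_a c B Δ δ m h' l' hδ h1 h2 h3
  have bb := Ee₂_bound_b c B Δ δ m h' l' hδ h1 h2 h3
  calc |Ghl c m h' l'|
      ≤ |(-((m:ℝ)^2))| * |Ee₂ c ((m:ℝ)*(l'-h'))| + |(m:ℝ)*(1-(m:ℝ))| * |Ee₂ c ((m:ℝ)*(h'-l')+l')| := by
        rw [Ghl, ← abs_mul, ← abs_mul]; exact abs_sub _ _
    _ ≤ (1+|(m:ℝ)|)^2 * (((2*|c|+4*(Δ+B))^2+4) * (1+|(m:ℝ)|)^2 * (Real.exp (c^2+B^2) * Real.exp (-((δ^2/2)*(m:ℝ)^2))))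
        + (1+|(m:ℝ)|)^2 * (((2*|c|+4*(Δ+B))^2+4) * (1+|(m:ℝ)|)^2 * (Real.exp (c^2+B^2) * Real.exp (-((δ^2/2)*(m:ℝ)^2)))) := by
        apply add_le_add
        · exact mul_le_mul hm1 ba (abs_nonneg _) (by positivity)
        · exact mul_le_mul hm2 bb (abs_nonneg _) (by positivity)
    _ = (2*((2*|c|+4*(Δ+B))^2+4)) * ((1+|(m:ℝ)|)^4 * (Real.exp (c^2+B^2) * Real.exp (-((δ^2/2)*(m:ℝ)^2)))) := by
        ring

include hδ h1 h2 h3 in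
lemma partA_bound : ‖(m:ℝ)^2 * Ee₂ c ((m:ℝ)*(l'-h'))‖
    ≤ ((2*|c|+4*(Δ+B))^2+4) * ((1+|(m:ℝ)|)^4 * (Real.exp (c^2+B^2) * Real.exp (-((δ^2/2)*(m:ℝ)^2)))) := by
  rw [Real.norm_eq_abs, abs_mul]
  have hm1 : |(m:ℝ)^2| ≤ (1 + |(m:ℝ)|)^2 := by
    rw [abs_pow, ← sq_abs]
    apply pow_le_pow_left₀ (abs_nonneg _)
    rw [abs_abs]; linarith [abs_nonneg (m:ℝ)]
  have ba := Ee₂_bound_a c B Δ δ m h' l' hδ h1 h2 h3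
  calc |(m:ℝ)^2| * |Ee₂ c ((m:ℝ)*(l'-h'))|
      ≤ (1+|(m:ℝ)|)^2 * (((2*|c|+4*(Δ+B))^2+4) * (1+|(m:ℝ)|)^2 * (Real.exp (c^2+B^2) * Real.exp (-((δ^2/2)*(m:ℝ)^2)))) :=
        mul_le_mul hm1 ba (abs_nonneg _) (by positivity)
    _ = ((2*|c|+4*(Δ+B))^2+4) * ((1+|(m:ℝ)|)^4 * (Real.exp (c^2+B^2) * Real.exp (-((δ^2/2)*(m:ℝ)^2)))) := by ring

include hδ h1 h2 h3 in
lemma partB_bound : ‖(m:ℝ)*(1-(m:ℝ)) * Ee₂ c ((m:ℝ)*(h'-l')+l')‖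
    ≤ ((2*|c|+4*(Δ+B))^2+4) * ((1+|(m:ℝ)|)^4 * (Real.exp (c^2+B^2) * Real.exp (-((δ^2/2)*(m:ℝ)^2)))) := by
  rw [Real.norm_eq_abs, abs_mul]
  have hm0 : (0:ℝ) ≤ 1 + |(m:ℝ)| := by positivity
  have hm2 : |(m:ℝ)*(1-(m:ℝ))| ≤ (1 + |(m:ℝ)|)^2 := by
    rw [abs_mul]
    have a1 : |(m:ℝ)| ≤ 1 + |(m:ℝ)| := by linarith [abs_nonneg (m:ℝ)]
    have a2 : |1-(m:ℝ)| ≤ 1 + |(m:ℝ)| := by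
      calc |1-(m:ℝ)| ≤ |(1:ℝ)| + |(m:ℝ)| := abs_sub _ _
        _ = 1 + |(m:ℝ)| := by rw [abs_one]
    calc |(m:ℝ)| * |1-(m:ℝ)| ≤ (1 + |(m:ℝ)|) * (1 + |(m:ℝ)|) :=
          mul_le_mul a1 a2 (abs_nonneg _) hm0
      _ = (1 + |(m:ℝ)|)^2 := (sq _).symm
  have bb := Ee₂_bound_b c B Δ δ m h' l' hδ h1 h2 h3
  calc |(m:ℝ)*(1-(m:ℝ))| * |Ee₂ c ((m:ℝ)*(h'-l')+l')|
      ≤ (1+|(m:ℝ)|)^2 * (((2*|c|+4*(Δ+B))^2+4) * (1+|(m:ℝ)|)^2 * (Real.exp (c^2+B^2) * Real.exp (-((δ^2/2)*(m:ℝ)^2)))) := by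
        exact mul_le_mul hm2 bb (abs_nonneg _) (by positivity)
    _ = ((2*|c|+4*(Δ+B))^2+4) * ((1+|(m:ℝ)|)^4 * (Real.exp (c^2+B^2) * Real.exp (-((δ^2/2)*(m:ℝ)^2)))) := by ring
end asm


/-- the joint density of (high, low, close) of the Wiener process with
drift `γ` on the unit interval is `Q̄(h,l,c;γ) = −∂²F/∂h∂l = f(c;γ)·𝓡(h,l|c)` on the
region `h > 0`, `l < 0`, `l < c < h`. -/
theorem joint_density_high_low_close
    (γ h l c : ℝ) (hh : 0 < h) (hl : l < 0) (hlc : l < c) (hch : c < h) :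
    - deriv (fun h' => deriv (fun l' => Fser γ c h' l') l) h
      = fclose c γ * Rcond h l c := by
  have hδ : 0 < (h-l)/2 := by linarith
  have hε : 0 < ((h-l)/2)^2/2 := by positivity
  set Sh : Set ℝ := Set.Ioo (h-(h-l)/4) (h+1) with hShdef
  set Sl : Set ℝ := Set.Ioo (l-1) (l+(h-l)/4) with hSldef
  have hSho : IsOpen Sh := isOpen_Ioo
  have hSlo : IsOpen Sl := isOpen_Ioo
  have hShc : IsPreconnected Sh := isPreconnected_Ioo
  have hSlc : IsPreconnected Sl := isPreconnected_Ioo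
  have hhm : h ∈ Sh := Set.mem_Ioo.mpr ⟨by linarith, by linarith⟩
  have hlm : l ∈ Sl := Set.mem_Ioo.mpr ⟨by linarith, by linarith⟩
  have region : ∀ h' ∈ Sh, ∀ l' ∈ Sl,
      (h-l)/2 ≤ h'-l' ∧ h'-l' ≤ h-l+2 ∧ |l'| ≤ |h|+|l|+2 := by
    rintro h' ⟨a1, a2⟩ l' ⟨b1, b2⟩
    refine ⟨by linarith, by linarith, ?_⟩
    rw [abs_le]
    constructor
    · have := neg_abs_le l
      have := abs_nonneg h
      linarith
    · have := le_abs_self h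
      have := abs_nonneg l
      linarith
  -- summable bound series
  have SuC : ∀ (C E0 : ℝ) (k : ℕ), Summable (fun m : ℤ =>
      C * ((1+|(m:ℝ)|)^k * (E0 * Real.exp (-(((h-l)/2)^2/2*(m:ℝ)^2))))) := by
    intro C E0 k
    have hs := (summable_gauss_int (((h-l)/2)^2/2) hε k).mul_left (C*E0)
    apply hs.congr
    intro m
    simp only [neg_mul]
    ring
  -- rewrite of Fser
  have hFser : ∀ h' l' : ℝ, Fser γ c h' l'
      = fclose c γ * ∑' m : ℤ, (Ee c ((m:ℝ)*(l'-h')) - Ee c ((m:ℝ)*(h'-l')+l')) := by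
    intro h' l'
    rw [Fser, ← tsum_mul_left]
    exact tsum_congr (fun m => term_eq γ c h' l' m)
  -- step 1 : inner derivative on Sh
  have key1 : ∀ h' ∈ Sh, deriv (fun l' => Fser γ c h' l') l
      = fclose c γ * ∑' m : ℤ, Gl c m h' l := by
    intro h' hh'
    have hfun : (fun l' => Fser γ c h' l') = (fun l' => fclose c γ *
        ∑' m : ℤ, (Ee c ((m:ℝ)*(l'-h')) - Ee c ((m:ℝ)*(h'-l')+l'))) :=
      funext (fun l' => hFser h' l')
    rw [hfun]
    have hd : HasDerivAt (fun l' => ∑' m : ℤ, (Ee c ((m:ℝ)*(l'-h')) - Ee c ((m:ℝ)*(h'-l')+l')))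
        (∑' m : ℤ, Gl c m h' l) l := by
      refine hasDerivAt_tsum_of_isPreconnected
        (SuC (2*(2*|c|+4*((h-l+2)+(|h|+|l|+2)))) (Real.exp (c^2+(|h|+|l|+2)^2)) 2)
        hSlo hSlc (fun m l' _ => hasDerivAt_term_l c m h' l') (fun m l' hl' => ?_) hlm ?_ hlm
      · obtain ⟨r1, r2, r3⟩ := region h' hh' l' hl'
        exact Gl_bound c (|h|+|l|+2) (h-l+2) ((h-l)/2) m h' l' hδ r1 r2 r3
      · apply Summable.of_norm_bounded (SuC 2 (Real.exp (c^2+(|h|+|l|+2)^2)) 0)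
        intro m
        obtain ⟨r1, r2, r3⟩ := region h' hh' l hlm
        exact term_bound_s12 c (|h|+|l|+2) (h-l+2) ((h-l)/2) m h' l hδ r1 r2 r3
    exact (hd.const_mul (fclose c γ)).deriv
  -- step 2 : outer derivative
  have ev : (fun h' => deriv (fun l' => Fser γ c h' l') l)
      =ᶠ[nhds h] (fun h' => fclose c γ * ∑' m : ℤ, Gl c m h' l) := by
    filter_upwards [hSho.mem_nhds hhm] with h' hh' using key1 h' hh'
  rw [ev.deriv_eq]
  have hd2 : HasDerivAt (fun h' => ∑' m : ℤ, Gl c m h' l) (∑' m : ℤ, Ghl c m h l) h := by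
    refine hasDerivAt_tsum_of_isPreconnected
      (SuC (2*((2*|c|+4*((h-l+2)+(|h|+|l|+2)))^2+4)) (Real.exp (c^2+(|h|+|l|+2)^2)) 4)
      hSho hShc (fun m h' _ => hasDerivAt_term_h c m l h') (fun m h' hh' => ?_) hhm ?_ hhm
    · obtain ⟨r1, r2, r3⟩ := region h' hh' l hlm
      exact Ghl_bound c (|h|+|l|+2) (h-l+2) ((h-l)/2) m h' l hδ r1 r2 r3
    · apply Summable.of_norm_bounded
        (SuC (2*(2*|c|+4*((h-l+2)+(|h|+|l|+2)))) (Real.exp (c^2+(|h|+|l|+2)^2)) 2)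
      intro m
      obtain ⟨r1, r2, r3⟩ := region h hhm l hlm
      exact Gl_bound c (|h|+|l|+2) (h-l+2) ((h-l)/2) m h l hδ r1 r2 r3
  rw [(hd2.const_mul (fclose c γ)).deriv]
  -- step 3 : algebra
  obtain ⟨r1, r2, r3⟩ := region h hhm l hlm
  have SP' : Summable (fun m : ℤ => (m:ℝ)^2 * Ee₂ c ((m:ℝ)*(l-h))) := by
    apply Summable.of_norm_bounded
      (SuC ((2*|c|+4*((h-l+2)+(|h|+|l|+2)))^2+4) (Real.exp (c^2+(|h|+|l|+2)^2)) 4)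
    intro m
    exact partA_bound c (|h|+|l|+2) (h-l+2) ((h-l)/2) m h l hδ r1 r2 r3
  have SQ : Summable (fun m : ℤ => (m:ℝ)*(1-(m:ℝ)) * Dfun ((m:ℝ)*(h-l)+l) c) := by
    have SQ' : Summable (fun m : ℤ => (m:ℝ)*(1-(m:ℝ)) * Ee₂ c ((m:ℝ)*(h-l)+l)) := by
      apply Summable.of_norm_bounded
        (SuC ((2*|c|+4*((h-l+2)+(|h|+|l|+2)))^2+4) (Real.exp (c^2+(|h|+|l|+2)^2)) 4)
      intro m
      exact partB_bound c (|h|+|l|+2) (h-l+2) ((h-l)/2) m h l hδ r1 r2 r3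
    apply (SQ'.div_const 4).congr
    intro m
    rw [Ee₂_eq]
    ring
  have SP : Summable (fun m : ℤ => (m:ℝ)^2 * Dfun ((m:ℝ)*(l-h)) c) := by
    apply (SP'.div_const 4).congr
    intro m
    rw [Ee₂_eq]
    ring
  have hcomp : ∀ m : ℤ, ((fun m : ℤ => (m:ℝ)^2 * Dfun ((m:ℝ)*(h-l)) c) ∘ (Equiv.neg ℤ)) m
      = (m:ℝ)^2 * Dfun ((m:ℝ)*(l-h)) c := by
    intro m
    show ((-m : ℤ):ℝ)^2 * Dfun (((-m : ℤ):ℝ)*(h-l)) c = _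
    push_cast
    rw [neg_sq, show -(m:ℝ)*(h-l) = (m:ℝ)*(l-h) by ring]
  have Sf : Summable (fun m : ℤ => (m:ℝ)^2 * Dfun ((m:ℝ)*(h-l)) c) :=
    (Equiv.neg ℤ).summable_iff.mp (SP.congr (fun m => (hcomp m).symm))
  have reindex : ∑' m : ℤ, (m:ℝ)^2 * Dfun ((m:ℝ)*(l-h)) c
      = ∑' m : ℤ, (m:ℝ)^2 * Dfun ((m:ℝ)*(h-l)) c := by
    rw [← (Equiv.neg ℤ).tsum_eq (fun m : ℤ => (m:ℝ)^2 * Dfun ((m:ℝ)*(h-l)) c)]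
    exact tsum_congr (fun b => (hcomp b).symm)
  have key3 : -∑' m : ℤ, Ghl c m h l = Rcond h l c := by
    rw [← tsum_neg]
    have e : ∀ m : ℤ, -(Ghl c m h l)
        = 4 * ((m:ℝ)^2 * Dfun ((m:ℝ)*(l-h)) c)
          + 4 * ((m:ℝ)*(1-(m:ℝ)) * Dfun ((m:ℝ)*(h-l)+l) c) := by
      intro m
      simp only [Ghl, Ee₂_eq]
      ring
    rw [tsum_congr e, Summable.tsum_add (SP.mul_left 4) (SQ.mul_left 4), tsum_mul_left, tsum_mul_left,
      reindex, Rcond]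
    have e2 : ∀ m : ℤ, (m:ℝ) * ((m:ℝ) * Dfun ((m:ℝ)*(h-l)) c
        + (1-(m:ℝ)) * Dfun ((m:ℝ)*(h-l)+l) c)
        = (m:ℝ)^2 * Dfun ((m:ℝ)*(h-l)) c + (m:ℝ)*(1-(m:ℝ)) * Dfun ((m:ℝ)*(h-l)+l) c := by
      intro m
      ring
    rw [tsum_congr e2, Summable.tsum_add Sf SQ]
    ring
  rw [← key3]
  ring
end
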